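/- If f : [a,b] → ℝ is absolutely continuous with a < b, and m is a real number such that f'(t) ≥ m for almost every t ∈ [a,b], then |∫_a^b f(t) dt − (b−a)/90 · (7f(a) + 32f((3a+b)/4) + 12f((a+b)/2) + 32f((a+3b)/4) + 7f(b))| ≤ (11/60) · ((f(b)−f(a))/(b−a) − m) · (b−a)². -/

import Mathlib

open MeasureTheory Set intervalIntegral

theorem boole_bound_0 (a b m : ℝ) (hab : a < b) (f f' : ℝ → ℝ)
    (hint : MeasureTheory.IntegrableOn f' (Set.Icc a b))
    (hac : ∀ x ∈ Set.Icc a b, f x - f a = ∫ t in a..x, f' t)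
    (hbound : ∀ᵐ t, t ∈ Set.Icc a b → m ≤ f' t) :
    |(∫ t in a..b, f t) - (b - a)/90 * (7*f a + 32*f ((3*a+b)/4) + 12*f ((a+b)/2) + 32*f ((a+3*b)/4) + 7*f b)| ≤ (11/60 * ((f b - f a)/(b - a) - m)) * (b - a)^2 := by
  have hle : a ≤ b := hab.le
  set F : ℝ → ℝ := fun x => ∫ s in a..x, f' s with hF
  set G : ℝ → ℝ := fun t => F t - m * (t - a) with hGdef
  set q1 : ℝ := (3*a+b)/4 with hq1
  set q2 : ℝ := (a+b)/2 with hq2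
  set q3 : ℝ := (a+3*b)/4 with hq3
  have haq1 : a ≤ q1 := by rw [hq1]; linarith
  have hq12 : q1 ≤ q2 := by rw [hq1, hq2]; linarith
  have hq23 : q2 ≤ q3 := by rw [hq2, hq3]; linarith
  have hq3b : q3 ≤ b := by rw [hq3]; linarith
  have haq2 : a ≤ q2 := haq1.trans hq12
  have haq3 : a ≤ q3 := haq2.trans hq23
  have hq2b : q2 ≤ b := hq23.trans hq3b
  have hq1b : q1 ≤ b := hq12.trans hq2b
  -- interval integrability of f' on subintervals
  have hii : ∀ x y, a ≤ x → x ≤ y → y ≤ b → IntervalIntegrable f' volume x y := by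
    intro x y hax hxy hyb
    apply IntegrableOn.intervalIntegrable
    rw [uIcc_of_le hxy]
    exact hint.mono_set (Icc_subset_Icc hax hyb)
  -- monotonicity of G
  have hGmono : ∀ x y, a ≤ x → x ≤ y → y ≤ b → G x ≤ G y := by
    intro x y hax hxy hyb
    have h1 : (∫ _ in x..y, m) ≤ ∫ s in x..y, f' s := by
      apply integral_mono_ae_restrict hxy intervalIntegrable_const (hii x y hax hxy hyb)
      filter_upwards [ae_restrict_of_ae hbound,
        ae_restrict_mem (measurableSet_Icc : MeasurableSet (Icc x y))] with t h1 h2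
      exact h1 ⟨hax.trans h2.1, h2.2.trans hyb⟩
    have h2 : F x + ∫ s in x..y, f' s = F y :=
      integral_add_adjacent_intervals (hii a x le_rfl hax (hxy.trans hyb))
        (hii x y hax hxy hyb)
    have h3 : (∫ _ in x..y, m) = (y - x) * m := by
      rw [intervalIntegral.integral_const, smul_eq_mul]
    simp only [hGdef]
    nlinarith [h1, h2, h3]
  -- continuity and integrability of G
  have hFc : ContinuousOn F (Icc a b) := by
    have := intervalIntegral.continuousOn_primitive_interval
      (a := a) (b := b) (μ := volume) (f := f') (by rw [uIcc_of_le hle]; exact hint)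
    rwa [uIcc_of_le hle] at this
  have hGc : ContinuousOn G (Icc a b) := hFc.sub ((continuous_const.mul
    (continuous_id.sub continuous_const)).continuousOn)
  have hGi : ∀ x y, a ≤ x → x ≤ y → y ≤ b → IntervalIntegrable G volume x y := by
    intro x y hax hxy hyb
    apply ContinuousOn.intervalIntegrable
    rw [uIcc_of_le hxy]
    exact hGc.mono (Icc_subset_Icc hax hyb)
  -- piece bounds
  have hup : ∀ x y, a ≤ x → x ≤ y → y ≤ b → (∫ t in x..y, G t) ≤ (y - x) * G y := by
    intro x y hax hxy hyb
    have := intervalIntegral.integral_mono_on (μ := volume) hxy (hGi x y hax hxy hyb)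
      intervalIntegrable_const (g := fun _ => G y)
      (fun t ht => hGmono t y (hax.trans ht.1) ht.2 hyb)
    rw [intervalIntegral.integral_const, smul_eq_mul] at this
    exact this
  have hlo : ∀ x y, a ≤ x → x ≤ y → y ≤ b → (y - x) * G x ≤ ∫ t in x..y, G t := by
    intro x y hax hxy hyb
    have := intervalIntegral.integral_mono_on (μ := volume) hxy
      intervalIntegrable_const
      (hGi x y hax hxy hyb) (f := fun _ => G x)
      (fun t ht => hGmono x t hax ht.1 (ht.2.trans hyb))
    rw [intervalIntegral.integral_const, smul_eq_mul] at this
    exact this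
  -- G at a
  have hGa : G a = 0 := by simp [hGdef, hF]
  -- f in terms of G
  have hfval : ∀ t ∈ Icc a b, f t = f a + m * (t - a) + G t := by
    intro t ht
    have := hac t ht
    simp only [hGdef, hF] at *
    linarith
  -- rewrite the integral of f
  have hIf : (∫ t in a..b, f t) = ∫ t in a..b, (f a + m * (t - a) + G t) := by
    apply intervalIntegral.integral_congr
    rw [uIcc_of_le hle]
    intro t ht
    exact hfval t ht
  have haffine : IntervalIntegrable (fun t => f a + m * (t - a)) volume a b :=
    (continuous_const.add (continuous_const.mul
      (continuous_id.sub continuous_const))).intervalIntegrable a b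
  have hsplit : (∫ t in a..b, (f a + m * (t - a) + G t))
      = (∫ t in a..b, (f a + m * (t - a))) + ∫ t in a..b, G t :=
    intervalIntegral.integral_add haffine (hGi a b le_rfl hle le_rfl)
  have haffval : (∫ t in a..b, (f a + m * (t - a)))
      = (b - a) * f a + m * ((b^2 - a^2)/2 - a * (b - a)) := by
    have h1 : (∫ t in a..b, (f a + m * (t - a)))
        = (∫ _ in a..b, f a) + ∫ t in a..b, m * (t - a) := by
      apply intervalIntegral.integral_add intervalIntegrable_const
      exact (continuous_const.mul (continuous_id.sub continuous_const)).intervalIntegrable a b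
    have h2 : (∫ t in a..b, m * (t - a)) = m * ∫ t in a..b, (t - a) := by
      rw [← intervalIntegral.integral_const_mul]
    have h3 : (∫ t in a..b, (t - a)) = (b^2 - a^2)/2 - a * (b - a) := by
      have := intervalIntegral.integral_sub (intervalIntegral.intervalIntegrable_id (a := a) (b := b) (μ := volume))
        ((intervalIntegrable_const (c := a)))
      simp only [integral_id, intervalIntegral.integral_const, smul_eq_mul] at this
      rw [this]
      ring
    rw [h1, h2, h3, intervalIntegral.integral_const, smul_eq_mul]
  -- split ∫ G into four pieces
  have hGsplit : (∫ t in a..b, G t) = (∫ t in a..q1, G t) + (∫ t in q1..q2, G t)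
      + (∫ t in q2..q3, G t) + (∫ t in q3..b, G t) := by
    rw [integral_add_adjacent_intervals (hGi a q1 le_rfl haq1 hq1b) (hGi q1 q2 haq1 hq12 hq2b),
      integral_add_adjacent_intervals (hGi a q2 le_rfl haq2 hq2b) (hGi q2 q3 haq2 hq23 hq3b),
      integral_add_adjacent_intervals (hGi a q3 le_rfl haq3 hq3b) (hGi q3 b haq3 hq3b le_rfl)]
  -- node values of f
  have hfq1 : f q1 = f a + m * (q1 - a) + G q1 := hfval q1 ⟨haq1, hq1b⟩
  have hfq2 : f q2 = f a + m * (q2 - a) + G q2 := hfval q2 ⟨haq2, hq2b⟩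
  have hfq3 : f q3 = f a + m * (q3 - a) + G q3 := hfval q3 ⟨haq3, hq3b⟩
  have hfb : f b = f a + m * (b - a) + G b := hfval b ⟨hle, le_rfl⟩
  -- RHS simplification
  have hRHS : (11/60 * ((f b - f a)/(b - a) - m)) * (b - a)^2 = 11/60 * G b * (b - a) := by
    rw [hfb]
    have hne : b - a ≠ 0 := by linarith
    field_simp
    ring
  -- the key algebraic identity
  have hkey : (∫ t in a..b, f t) - (b - a)/90 * (7*f a + 32*f q1 + 12*f q2 + 32*f q3 + 7*f b)
      = ((∫ t in a..q1, G t) + (∫ t in q1..q2, G t) + (∫ t in q2..q3, G t) + (∫ t in q3..b, G t))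
        - (b - a)/90 * (32 * G q1 + 12 * G q2 + 32 * G q3 + 7 * G b) := by
    rw [hIf, hsplit, haffval, hGsplit, hfq1, hfq2, hfq3, hfb, hq1, hq2, hq3]
    ring
  rw [hkey, hRHS]
  -- order facts on G values
  have hg0 : 0 ≤ G q1 := hGa ▸ hGmono a q1 le_rfl haq1 hq1b
  have hg12 : G q1 ≤ G q2 := hGmono q1 q2 haq1 hq12 hq2b
  have hg23 : G q2 ≤ G q3 := hGmono q2 q3 haq2 hq23 hq3b
  have hg3b : G q3 ≤ G b := hGmono q3 b haq3 hq3b le_rfl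
  -- piece bounds instantiated
  have hu1 := hup a q1 le_rfl haq1 hq1b
  have hu2 := hup q1 q2 haq1 hq12 hq2b
  have hu3 := hup q2 q3 haq2 hq23 hq3b
  have hu4 := hup q3 b haq3 hq3b le_rfl
  have hl1 := hlo a q1 le_rfl haq1 hq1b
  have hl2 := hlo q1 q2 haq1 hq12 hq2b
  have hl3 := hlo q2 q3 haq2 hq23 hq3b
  have hl4 := hlo q3 b haq3 hq3b le_rfl
  rw [hGa] at hl1
  have hq1v : q1 - a = (b - a)/4 := by rw [hq1]; ring
  have hq2v : q2 - q1 = (b - a)/4 := by rw [hq1, hq2]; ring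
  have hq3v : q3 - q2 = (b - a)/4 := by rw [hq2, hq3]; ring
  have hq4v : b - q3 = (b - a)/4 := by rw [hq3]; ring
  rw [hq1v] at hu1 hl1
  rw [hq2v] at hu2 hl2
  rw [hq3v] at hu3 hl3
  rw [hq4v] at hu4 hl4
  have hba : (0:ℝ) ≤ b - a := by linarith
  rw [abs_le]
  constructor
  · linarith [mul_nonneg hba hg0, mul_nonneg hba (sub_nonneg.2 hg23),
      mul_nonneg hba (sub_nonneg.2 (hg23.trans hg3b)), hu1, hu2, hu3, hu4]
  · linarith [mul_nonneg hba hg0, mul_nonneg hba (sub_nonneg.2 hg12),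
      mul_nonneg hba (sub_nonneg.2 hg3b), hl1, hl2, hl3, hl4]
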